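/- arXiv:2406.02207 — 2 statements merged into one kernel-verified Lean document; each statement's English description precedes it below -/
import Mathlib

section
/- Define φ(r, t) := (Q0/(4πD))·(E1(‖r − r0‖²/(2Ds + 4D(t − t0))) − E1(‖r − r0‖²/(2Ds))) for r ≠ r0 and t0 ≤ t. Then lim_{D→0+} φ(r, t) = (Q0(t − t0)/(2πDs))·exp(−‖r − r0‖²/(2Ds)). -/
open Real MeasureTheory Filter

/-- The exponential integral of order one. -/
noncomputable def E1 (v : ℝ) : ℝ := ∫ u in Set.Ioi v, u⁻¹ * Real.exp (-u)

lemma E1_integrand_integrableOn {c : ℝ} (hc : 0 < c) :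
    IntegrableOn (fun u : ℝ => u⁻¹ * Real.exp (-u)) (Set.Ioi c) := by
  have hint : IntegrableOn (fun u : ℝ => c⁻¹ * Real.exp (-(1 : ℝ) * u)) (Set.Ioi c) :=
    (exp_neg_integrableOn_Ioi c one_pos).const_mul _
  refine Integrable.mono' hint ?_ ?_
  · exact ((measurable_inv.mul (Real.measurable_exp.comp measurable_neg)).aestronglyMeasurable).restrict
  · filter_upwards [ae_restrict_mem measurableSet_Ioi] with u hu
    have hcu : c < u := hu
    have hu0 : 0 < u := hc.trans hcu
    rw [Real.norm_eq_abs, abs_of_nonneg (by positivity)]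
    have h1 : u⁻¹ ≤ c⁻¹ := inv_anti₀ hc hcu.le
    have : Real.exp (-u) ≤ Real.exp (-u) := le_refl _
    calc u⁻¹ * Real.exp (-u) ≤ c⁻¹ * Real.exp (-u) := by
          exact mul_le_mul_of_nonneg_right h1 (Real.exp_pos _).le
      _ = c⁻¹ * Real.exp (-(1:ℝ) * u) := by ring_nf

lemma E1_split {c x : ℝ} (hc : 0 < c) (hcx : c ≤ x) :
    E1 x = E1 c - ∫ u in c..x, u⁻¹ * Real.exp (-u) := by
  have hIoc : IntegrableOn (fun u : ℝ => u⁻¹ * Real.exp (-u)) (Set.Ioc c x) :=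
    (E1_integrand_integrableOn hc).mono_set Set.Ioc_subset_Ioi_self
  have hIoi : IntegrableOn (fun u : ℝ => u⁻¹ * Real.exp (-u)) (Set.Ioi x) :=
    (E1_integrand_integrableOn hc).mono_set (Set.Ioi_subset_Ioi hcx)
  have hsplit : (∫ u in Set.Ioi c, u⁻¹ * Real.exp (-u))
      = (∫ u in Set.Ioc c x, u⁻¹ * Real.exp (-u)) + ∫ u in Set.Ioi x, u⁻¹ * Real.exp (-u) := by
    rw [← MeasureTheory.setIntegral_union (Set.Ioc_disjoint_Ioi le_rfl) measurableSet_Ioi hIoc hIoi,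
      Set.Ioc_union_Ioi_eq_Ioi hcx]
  rw [E1, E1, hsplit, intervalIntegral.integral_of_le hcx]
  ring

lemma E1_hasDerivAt {v : ℝ} (hv : 0 < v) :
    HasDerivAt E1 (-(v⁻¹ * Real.exp (-v))) v := by
  set c := v / 2 with hc
  have hc0 : 0 < c := by positivity
  have hcv : c < v := by simp [hc]; linarith
  have hFTC : HasDerivAt (fun x => ∫ u in c..x, u⁻¹ * Real.exp (-u))
      (v⁻¹ * Real.exp (-v)) v := by
    refine intervalIntegral.integral_hasDerivAt_right ?_ ?_ ?_
    · rw [intervalIntegrable_iff]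
      exact (E1_integrand_integrableOn hc0).mono_set
        (by rw [Set.uIoc_of_le hcv.le]; exact Set.Ioc_subset_Ioi_self)
    · exact ((measurable_inv.mul (Real.measurable_exp.comp measurable_neg)).aestronglyMeasurable).stronglyMeasurableAtFilter
    · exact ((continuousAt_inv₀ (ne_of_gt hv)).mul ((Real.continuous_exp.continuousAt).comp (continuousAt_neg)))
  have hEq : Set.EqOn E1 (fun x => E1 c - ∫ u in c..x, u⁻¹ * Real.exp (-u)) (Set.Ioi c) := by
    intro x hx
    exact E1_split hc0 (le_of_lt hx)
  have := (hFTC.const_sub (E1 c))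
  refine this.congr_of_eventuallyEq ?_
  filter_upwards [Ioi_mem_nhds hcv] with x hx
  exact hEq hx

theorem limit_diffusion_on_small_D (Q0 Ds t0 t : ℝ)
    (r r0 : EuclideanSpace ℝ (Fin 2))
    (hQ : 0 < Q0) (hDs : 0 < Ds) (ht : t0 < t) (hr : r ≠ r0) :
    Tendsto (fun D : ℝ =>
        (Q0 / (4 * Real.pi * D)) *
          (E1 (‖r - r0‖ ^ 2 / (2 * Ds + 4 * D * (t - t0)))
            - E1 (‖r - r0‖ ^ 2 / (2 * Ds))))
      (nhdsWithin 0 (Set.Ioi 0))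
      (nhds ((Q0 * (t - t0) / (2 * Real.pi * Ds)) *
        Real.exp (-‖r - r0‖ ^ 2 / (2 * Ds)))) := by
  set a := ‖r - r0‖ ^ 2 with ha
  have ha0 : 0 < a :=
    pow_pos (norm_pos_iff.mpr (sub_ne_zero.mpr hr)) 2
  set τ := t - t0 with hτ
  have hτ0 : 0 < τ := sub_pos.mpr ht
  set v0 := a / (2 * Ds) with hv0
  have hv0pos : 0 < v0 := by positivity
  -- inner function
  have hinner : HasDerivAt (fun D : ℝ => a / (2 * Ds + 4 * D * τ))
      (-(a * (4 * τ)) / (2 * Ds) ^ 2) 0 := by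
    have hden : HasDerivAt (fun D : ℝ => 2 * Ds + 4 * D * τ) (4 * τ) 0 := by
      simpa using ((hasDerivAt_id (0:ℝ)).const_mul 4 |>.mul_const τ).const_add (2 * Ds)
    have hne : 2 * Ds + 4 * 0 * τ ≠ 0 := by simp; positivity
    simpa [Pi.div_def] using (hasDerivAt_const (0:ℝ) a).div hden hne
  have hF : HasDerivAt (fun D : ℝ => E1 (a / (2 * Ds + 4 * D * τ)))
      ((-(v0⁻¹ * Real.exp (-v0))) * (-(a * (4 * τ)) / (2 * Ds) ^ 2)) 0 := by
    have hE : HasDerivAt E1 (-(v0⁻¹ * Real.exp (-v0)))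
        ((fun D : ℝ => a / (2 * Ds + 4 * D * τ)) 0) := by
      have h0 : (fun D : ℝ => a / (2 * Ds + 4 * D * τ)) 0 = v0 := by norm_num [hv0]
      rw [h0]; exact E1_hasDerivAt hv0pos
    exact hE.comp 0 hinner
  set F := fun D : ℝ => E1 (a / (2 * Ds + 4 * D * τ)) with hFdef
  set L := (-(v0⁻¹ * Real.exp (-v0))) * (-(a * (4 * τ)) / (2 * Ds) ^ 2) with hL
  have hslope : Tendsto (slope F 0) (nhdsWithin 0 {(0:ℝ)}ᶜ) (nhds L) :=
    hasDerivAt_iff_tendsto_slope.mp hF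
  have hslope' : Tendsto (slope F 0) (nhdsWithin 0 (Set.Ioi 0)) (nhds L) :=
    hslope.mono_left (nhdsWithin_mono 0 (fun x hx => ne_of_gt hx))
  have hmul : Tendsto (fun D => Q0 / (4 * Real.pi) * slope F 0 D)
      (nhdsWithin 0 (Set.Ioi 0)) (nhds (Q0 / (4 * Real.pi) * L)) :=
    hslope'.const_mul _
  have hfun : (fun D : ℝ =>
        (Q0 / (4 * Real.pi * D)) * (E1 (a / (2 * Ds + 4 * D * τ)) - E1 (a / (2 * Ds))))
      = fun D => Q0 / (4 * Real.pi) * slope F 0 D := by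
    funext D
    have hF0 : F 0 = E1 (a / (2 * Ds)) := by simp [hFdef]
    rw [slope_def_field, hF0, hFdef]
    ring
  have hval : Q0 / (4 * Real.pi) * L
      = (Q0 * τ / (2 * Real.pi * Ds)) * Real.exp (-a / (2 * Ds)) := by
    rw [hL, hv0]
    have hπ : Real.pi ≠ 0 := Real.pi_ne_zero
    have : Real.exp (-(a / (2 * Ds))) = Real.exp (-a / (2 * Ds)) := by rw [neg_div]
    rw [this]
    field_simp
  rw [hfun, ← hval]
  exact hmul
end

section
/- Define φ_off(r, t) := (Q0/(4πD))·(E1(‖r − r0‖²/(2Ds + 4D(t − t0))) − E1(‖r − r0‖²/(2Ds + 4D(t − t0 − τ)))) for r ≠ r0 and t > t0 + τ. Then lim_{D→0+} φ_off(r, t) = (Q0 τ/(2πDs))·exp(−‖r − r0‖²/(2Ds)), and lim_{D→∞} φ_off(r, t) = 0. -/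
open Real MeasureTheory Filter

lemma E1_integrableOn {v : ℝ} (hv : 0 < v) :
    IntegrableOn (fun u : ℝ => u⁻¹ * Real.exp (-u)) (Set.Ioi v) := by
  have h1 : IntegrableOn (fun u : ℝ => v⁻¹ * Real.exp (-(1 : ℝ) * u)) (Set.Ioi v) :=
    (exp_neg_integrableOn_Ioi v one_pos).const_mul v⁻¹
  apply h1.mono'
  · apply ContinuousOn.aestronglyMeasurable _ measurableSet_Ioi
    apply ContinuousOn.mul
    · exact continuousOn_inv₀.mono (fun u hu => ne_of_gt (hv.trans hu))
    · exact (Real.continuous_exp.comp continuous_neg).continuousOn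
  · filter_upwards [ae_restrict_mem measurableSet_Ioi] with u hu
    have hu0 : 0 < u := hv.trans hu
    rw [Real.norm_eq_abs, abs_of_nonneg (by positivity)]
    rw [neg_one_mul]
    gcongr
    exact le_of_lt hu

lemma E1_diff {v1 v2 : ℝ} (h1 : 0 < v1) (h12 : v1 ≤ v2) :
    E1 v1 - E1 v2 = ∫ u in Set.Ioc v1 v2, u⁻¹ * Real.exp (-u) := by
  have hv2 : 0 < v2 := lt_of_lt_of_le h1 h12
  have h : E1 v1 = (∫ u in Set.Ioc v1 v2, u⁻¹ * Real.exp (-u)) + E1 v2 := by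
    rw [E1, E1, ← setIntegral_union (Set.Ioc_disjoint_Ioi le_rfl) measurableSet_Ioi
      ((E1_integrableOn h1).mono_set Set.Ioc_subset_Ioi_self) (E1_integrableOn hv2),
      Set.Ioc_union_Ioi_eq_Ioi h12]
  rw [h]; ring

lemma E1_diff_bounds {v1 v2 : ℝ} (h1 : 0 < v1) (h12 : v1 ≤ v2) :
    v2⁻¹ * Real.exp (-v2) * (v2 - v1) ≤ E1 v1 - E1 v2 ∧
      E1 v1 - E1 v2 ≤ v1⁻¹ * Real.exp (-v1) * (v2 - v1) := by
  have hv2 : 0 < v2 := lt_of_lt_of_le h1 h12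
  rw [E1_diff h1 h12, ← intervalIntegral.integral_of_le h12]
  have hInt : IntervalIntegrable (fun u : ℝ => u⁻¹ * Real.exp (-u)) volume v1 v2 := by
    rw [intervalIntegrable_iff_integrableOn_Ioc_of_le h12]
    exact (E1_integrableOn h1).mono_set Set.Ioc_subset_Ioi_self
  constructor
  · have hpt : ∀ u ∈ Set.Icc v1 v2, v2⁻¹ * Real.exp (-v2) ≤ u⁻¹ * Real.exp (-u) := by
      intro u hu
      have hu0 : 0 < u := lt_of_lt_of_le h1 hu.1
      gcongr
      · exact hu.2
      · exact hu.2
    have h := intervalIntegral.integral_mono_on h12 intervalIntegrable_const hInt hpt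
    rw [intervalIntegral.integral_const, smul_eq_mul] at h
    nlinarith [h]
  · have hpt : ∀ u ∈ Set.Icc v1 v2, u⁻¹ * Real.exp (-u) ≤ v1⁻¹ * Real.exp (-v1) := by
      intro u hu
      have hu0 : 0 < u := lt_of_lt_of_le h1 hu.1
      gcongr
      · exact hu.1
      · exact hu.1
    have h := intervalIntegral.integral_mono_on h12 hInt intervalIntegrable_const hpt
    rw [intervalIntegral.integral_const, smul_eq_mul] at h
    nlinarith [h]

theorem limit_diffusion_off (Q0 Ds t0 τ t : ℝ)
    (r r0 : EuclideanSpace ℝ (Fin 2))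
    (hQ : 0 < Q0) (hDs : 0 < Ds) (hτ : 0 < τ) (ht : t0 + τ < t) (hr : r ≠ r0) :
    Tendsto (fun D : ℝ =>
        (Q0 / (4 * Real.pi * D)) *
          (E1 (‖r - r0‖ ^ 2 / (2 * Ds + 4 * D * (t - t0)))
            - E1 (‖r - r0‖ ^ 2 / (2 * Ds + 4 * D * (t - t0 - τ)))))
      (nhdsWithin 0 (Set.Ioi 0))
      (nhds ((Q0 * τ / (2 * Real.pi * Ds)) *
        Real.exp (-‖r - r0‖ ^ 2 / (2 * Ds)))) ∧
    Tendsto (fun D : ℝ =>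
        (Q0 / (4 * Real.pi * D)) *
          (E1 (‖r - r0‖ ^ 2 / (2 * Ds + 4 * D * (t - t0)))
            - E1 (‖r - r0‖ ^ 2 / (2 * Ds + 4 * D * (t - t0 - τ)))))
      atTop (nhds 0) := by
  have hr0 : (0:ℝ) < ‖r - r0‖ := norm_pos_iff.mpr (sub_ne_zero.mpr hr)
  set a : ℝ := ‖r - r0‖ ^ 2 with ha_def
  have ha : 0 < a := by positivity
  have hT2 : 0 < t - t0 - τ := by linarith
  have hT1 : 0 < t - t0 := by linarith
  have hπ : 0 < Real.pi := Real.pi_pos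
  set F : ℝ → ℝ := fun D =>
    (Q0 / (4 * Real.pi * D)) *
      (E1 (a / (2 * Ds + 4 * D * (t - t0)))
        - E1 (a / (2 * Ds + 4 * D * (t - t0 - τ)))) with hF_def
  set L : ℝ → ℝ := fun D =>
    Q0 * τ * Real.exp (-(a / (2 * Ds + 4 * D * (t - t0 - τ)))) /
      (Real.pi * (2 * Ds + 4 * D * (t - t0))) with hL_def
  set U : ℝ → ℝ := fun D =>
    Q0 * τ * Real.exp (-(a / (2 * Ds + 4 * D * (t - t0)))) /
      (Real.pi * (2 * Ds + 4 * D * (t - t0 - τ))) with hU_def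
  have key : ∀ D : ℝ, 0 < D → L D ≤ F D ∧ F D ≤ U D := by
    intro D hD
    have hd2 : 0 < 2 * Ds + 4 * D * (t - t0 - τ) := by nlinarith
    have hd1 : 0 < 2 * Ds + 4 * D * (t - t0) := by nlinarith
    have hd2' := hd2.ne'
    have hd1' := hd1.ne'
    have hD' := hD.ne'
    have hπ' := hπ.ne'
    have ha' := ha.ne'
    have h1 : 0 < a / (2 * Ds + 4 * D * (t - t0)) := by positivity
    have h12 : a / (2 * Ds + 4 * D * (t - t0)) ≤ a / (2 * Ds + 4 * D * (t - t0 - τ)) := by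
      rw [div_le_div_iff₀ hd1 hd2]
      nlinarith [mul_pos (mul_pos ha hD) hτ]
    obtain ⟨hl, hu⟩ := E1_diff_bounds h1 h12
    have hc : (0:ℝ) < Q0 / (4 * Real.pi * D) := by positivity
    constructor
    · calc L D = (Q0 / (4 * Real.pi * D)) *
            ((a / (2 * Ds + 4 * D * (t - t0 - τ)))⁻¹ *
              Real.exp (-(a / (2 * Ds + 4 * D * (t - t0 - τ)))) *
              (a / (2 * Ds + 4 * D * (t - t0 - τ)) - a / (2 * Ds + 4 * D * (t - t0)))) := by
            rw [hL_def]
            field_simp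
            ring
        _ ≤ F D := mul_le_mul_of_nonneg_left hl hc.le
    · calc F D ≤ (Q0 / (4 * Real.pi * D)) *
            ((a / (2 * Ds + 4 * D * (t - t0)))⁻¹ *
              Real.exp (-(a / (2 * Ds + 4 * D * (t - t0)))) *
              (a / (2 * Ds + 4 * D * (t - t0 - τ)) - a / (2 * Ds + 4 * D * (t - t0)))) :=
            mul_le_mul_of_nonneg_left hu hc.le
        _ = U D := by
            rw [hU_def]
            field_simp
            ring
  have hden1 : Tendsto (fun D : ℝ => 2 * Ds + 4 * D * (t - t0)) (nhds 0) (nhds (2 * Ds)) := by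
    have hc : Continuous fun D : ℝ => 2 * Ds + 4 * D * (t - t0) := by fun_prop
    simpa using hc.tendsto 0
  have hden2 : Tendsto (fun D : ℝ => 2 * Ds + 4 * D * (t - t0 - τ)) (nhds 0) (nhds (2 * Ds)) := by
    have hc : Continuous fun D : ℝ => 2 * Ds + 4 * D * (t - t0 - τ) := by fun_prop
    simpa using hc.tendsto 0
  have h2Ds : (2 * Ds) ≠ 0 := by positivity
  have hexp1 : Tendsto (fun D : ℝ => Real.exp (-(a / (2 * Ds + 4 * D * (t - t0)))))
      (nhds 0) (nhds (Real.exp (-(a / (2 * Ds))))) :=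
    (Real.continuous_exp.tendsto _).comp ((tendsto_const_nhds.div hden1 h2Ds).neg)
  have hexp2 : Tendsto (fun D : ℝ => Real.exp (-(a / (2 * Ds + 4 * D * (t - t0 - τ)))))
      (nhds 0) (nhds (Real.exp (-(a / (2 * Ds))))) :=
    (Real.continuous_exp.tendsto _).comp ((tendsto_const_nhds.div hden2 h2Ds).neg)
  have hval : Q0 * τ * Real.exp (-(a / (2 * Ds))) / (Real.pi * (2 * Ds))
      = Q0 * τ / (2 * Real.pi * Ds) * Real.exp (-a / (2 * Ds)) := by
    rw [neg_div]; field_simp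
  have hLlim : Tendsto L (nhdsWithin 0 (Set.Ioi 0))
      (nhds (Q0 * τ / (2 * Real.pi * Ds) * Real.exp (-a / (2 * Ds)))) := by
    rw [← hval]
    exact (((tendsto_const_nhds.mul hexp2).div (tendsto_const_nhds.mul hden1)
      (by positivity)).mono_left nhdsWithin_le_nhds)
  have hUlim : Tendsto U (nhdsWithin 0 (Set.Ioi 0))
      (nhds (Q0 * τ / (2 * Real.pi * Ds) * Real.exp (-a / (2 * Ds)))) := by
    rw [← hval]
    exact (((tendsto_const_nhds.mul hexp1).div (tendsto_const_nhds.mul hden2)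
      (by positivity)).mono_left nhdsWithin_le_nhds)
  constructor
  · refine tendsto_of_tendsto_of_tendsto_of_le_of_le' hLlim hUlim ?_ ?_
    · filter_upwards [self_mem_nhdsWithin] with D hD
      exact (key D hD).1
    · filter_upwards [self_mem_nhdsWithin] with D hD
      exact (key D hD).2
  · -- second limit
    have hW : Tendsto (fun D : ℝ => Q0 * τ / (Real.pi * (2 * Ds + 4 * D * (t - t0 - τ))))
        atTop (nhds 0) := by
      apply Tendsto.div_atTop tendsto_const_nhds
      apply Tendsto.const_mul_atTop hπ
      apply tendsto_atTop_add_const_left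
      exact Tendsto.atTop_mul_const hT2 (tendsto_id.const_mul_atTop (by norm_num : (0:ℝ) < 4))
    refine tendsto_of_tendsto_of_tendsto_of_le_of_le' tendsto_const_nhds hW ?_ ?_
    · filter_upwards [eventually_gt_atTop 0] with D hD
      refine le_trans ?_ (key D hD).1
      have hd1 : 0 < 2 * Ds + 4 * D * (t - t0) := by nlinarith
      have hd2 : 0 < 2 * Ds + 4 * D * (t - t0 - τ) := by nlinarith
      rw [hL_def]
      positivity
    · filter_upwards [eventually_gt_atTop 0] with D hD
      refine le_trans (key D hD).2 ?_
      have hd2 : 0 < 2 * Ds + 4 * D * (t - t0 - τ) := by nlinarith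
      rw [hU_def]
      simp only
      rw [div_le_div_iff₀ (by positivity) (by positivity)]
      have hd1 : 0 < 2 * Ds + 4 * D * (t - t0) := by nlinarith
      have he : Real.exp (-(a / (2 * Ds + 4 * D * (t - t0)))) ≤ 1 := by
        rw [Real.exp_le_one_iff]
        have : 0 ≤ a / (2 * Ds + 4 * D * (t - t0)) := by positivity
        linarith
      nlinarith [he, mul_pos (mul_pos (mul_pos hQ hτ) hπ) hd2]
end
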